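/- For K ≥ 1 define r_K = [ (1/K)·Σ_{k=1}^K 1/(K + k) ] / [ (1/(2K))·Σ_{k=1}^K 1/k ] = 2·(Σ_{k=1}^K 1/(K + k)) / (Σ_{k=1}^K 1/k). Then r_K → 0 as K → ∞. Consequently, for the triangular instance with v_k = 1/(K − k + 1), q_k = 1/2 and α_k = 1/K, the profit ratio of the optimal uniform price to optimal third-degree price discrimination, which equals r_K, becomes arbitrarily small as the number of segments K grows; thus regularity of the distributions does not guarantee any constant-factor performance of uniform pricing. -/

import Mathlib

open Filter

/-- **The profit ratio of the triangular instance vanishes.**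
The ratio `r_K = [(1/K) Σ_{k=1}^K 1/(K+k)] / [(1/(2K)) Σ_{k=1}^K 1/k]
= 2 (Σ_{k=1}^K 1/(K+k)) / (Σ_{k=1}^K 1/k)` tends to `0` as `K → ∞`; hence for
the triangular instance with `v_k = 1/(K-k+1)`, `q_k = 1/2`, `α_k = 1/K` the
profit ratio of the optimal uniform price to optimal third-degree price
discrimination becomes arbitrarily small as the number of segments grows. -/
theorem triangular_profit_ratio_tendsto_zero :
    (∀ K : ℕ, 1 ≤ K →
      2 * (∑ k ∈ Finset.range K, 1 / ((K : ℝ) + ((k : ℝ) + 1))) /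
          (∑ k ∈ Finset.range K, 1 / ((k : ℝ) + 1))
        = ((1 / (K : ℝ)) * ∑ k ∈ Finset.range K, 1 / ((K : ℝ) + ((k : ℝ) + 1))) /
          ((1 / (2 * (K : ℝ))) * ∑ k ∈ Finset.range K, 1 / ((k : ℝ) + 1))) ∧
    Tendsto (fun K : ℕ =>
        2 * (∑ k ∈ Finset.range K, 1 / ((K : ℝ) + ((k : ℝ) + 1))) /
          (∑ k ∈ Finset.range K, 1 / ((k : ℝ) + 1)))
      atTop (nhds 0) := by
  constructor
  · intro K hK
    have hK0 : (K : ℝ) ≠ 0 := Nat.cast_ne_zero.mpr (by omega)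
    set A := ∑ k ∈ Finset.range K, 1 / ((K : ℝ) + ((k : ℝ) + 1)) with hA
    set B := ∑ k ∈ Finset.range K, 1 / ((k : ℝ) + 1) with hB
    by_cases hBz : B = 0
    · simp [hBz]
    · field_simp
  · have hB : Tendsto (fun K : ℕ => ∑ k ∈ Finset.range K, 1 / ((k : ℝ) + 1))
        atTop atTop := by
      simpa using Real.tendsto_sum_range_one_div_nat_succ_atTop
    have hBinv : Tendsto (fun K : ℕ =>
        2 / (∑ k ∈ Finset.range K, 1 / ((k : ℝ) + 1))) atTop (nhds 0) := by
      simpa [div_eq_mul_inv] using hB.inv_tendsto_atTop.const_mul (2 : ℝ)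
    refine squeeze_zero' ?_ ?_ hBinv
    · filter_upwards with K
      apply div_nonneg
      · positivity
      · apply Finset.sum_nonneg; intro k _; positivity
    · filter_upwards [eventually_ge_atTop 1] with K hK
      have hBpos : (0:ℝ) < ∑ k ∈ Finset.range K, 1 / ((k : ℝ) + 1) := by
        apply Finset.sum_pos
        · intro k _; positivity
        · exact Finset.nonempty_range_iff.mpr (by omega)
      apply div_le_div_of_nonneg_right ?_ hBpos.le
      have hA1 : (∑ k ∈ Finset.range K, 1 / ((K : ℝ) + ((k : ℝ) + 1))) ≤ 1 := by
        calc (∑ k ∈ Finset.range K, 1 / ((K : ℝ) + ((k : ℝ) + 1)))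
            ≤ ∑ k ∈ Finset.range K, 1 / ((K : ℝ)) := by
              apply Finset.sum_le_sum
              intro k _
              apply one_div_le_one_div_of_le
              · exact_mod_cast Nat.cast_pos.mpr (by omega)
              · have : (0:ℝ) ≤ (k:ℝ) := Nat.cast_nonneg k
                linarith
          _ = 1 := by
              rw [Finset.sum_const, Finset.card_range, nsmul_eq_mul]
              field_simp
      linarith
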